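/- For every real number A ≥ 1, every integer m ≥ 1, and every function f : ℕ → ℂ with |f(n)| ≤ e^{n/(2A)} for all n, one has ∑_{n > Am} e^{−n/A} f(n)/n = −(e^{−m}/(Am)) ∑_{n=1}^{⌊Am⌋} f(n) + (1/A) ∫_m^∞ e^{−t} (∑_{n=1}^{⌊At⌋} f(n)) (1 + 1/t) dt/t. -/

import Mathlib

open MeasureTheory Set Real

noncomputable def rr (t : ℝ) : ℝ := Real.exp (-t) * (1 + 1/t) / t

lemma rr_nonneg {t : ℝ} (ht : 0 < t) : 0 ≤ rr t := by
  unfold rr; positivity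

lemma aux_hasDeriv {x : ℝ} (hx : 0 < x) :
    HasDerivAt (fun t : ℝ => -(Real.exp (-t) / t)) (rr x) x := by
  have h1 : HasDerivAt (fun t : ℝ => Real.exp (-t)) (-Real.exp (-x)) x := by
    exact ((Real.hasDerivAt_exp (-x)).comp x (hasDerivAt_neg x)).congr_deriv (by ring)
  have h2 : HasDerivAt (fun t : ℝ => t⁻¹) (-(x^2)⁻¹) x := hasDerivAt_inv hx.ne'
  have h3 := (h1.mul h2).neg
  have he : (fun t : ℝ => -(Real.exp (-t) / t)) = fun t => -(Real.exp (-t) * t⁻¹) := by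
    funext t; rw [div_eq_mul_inv]
  rw [he]
  refine h3.congr_deriv ?_
  unfold rr
  field_simp
  ring

lemma aux_tendsto : Filter.Tendsto (fun t : ℝ => -(Real.exp (-t) / t)) Filter.atTop (nhds 0) := by
  have : Filter.Tendsto (fun t : ℝ => Real.exp (-t) / t) Filter.atTop (nhds 0) := by
    simpa [div_eq_mul_inv] using (Real.tendsto_exp_neg_atTop_nhds_zero).mul tendsto_inv_atTop_zero
  simpa using this.neg

lemma aux_integrableOn {a : ℝ} (ha : 0 < a) : IntegrableOn rr (Set.Ioi a) :=
  integrableOn_Ioi_deriv_of_nonneg' (g := fun t => -(Real.exp (-t) / t)) (l := 0)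
    (fun x hx => aux_hasDeriv (lt_of_lt_of_le ha hx)) (fun x hx => rr_nonneg (lt_trans ha hx))
    aux_tendsto

lemma aux_integral {a : ℝ} (ha : 0 < a) :
    ∫ t in Set.Ioi a, rr t = Real.exp (-a) / a := by
  have := integral_Ioi_of_hasDerivAt_of_nonneg' (g := fun t => -(Real.exp (-t) / t))
    (g' := rr) (a := a) (l := 0)
    (fun x hx => aux_hasDeriv (lt_of_lt_of_le ha hx))
    (fun x hx => rr_nonneg (lt_trans ha hx)) aux_tendsto
  rw [this]; ring

noncomputable def Fa (A : ℝ) (f : ℕ → ℂ) (n : ℕ) (t : ℝ) : ℂ :=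
  if n = 0 then 0 else
    Set.indicator (Set.Ici ((n:ℝ)/A)) (fun t => f n * ((rr t : ℝ) : ℂ)) t

lemma Fa_eq (A : ℝ) (f : ℕ → ℂ) {n : ℕ} (hn : n ≠ 0) (t : ℝ) :
    Fa A f n t = f n * ((Set.indicator (Set.Ici ((n:ℝ)/A)) rr t : ℝ) : ℂ) := by
  unfold Fa
  rw [if_neg hn]
  by_cases ht : t ∈ Set.Ici ((n:ℝ)/A)
  · rw [Set.indicator_of_mem ht, Set.indicator_of_mem ht]
  · rw [Set.indicator_of_notMem ht]
    simp [Set.indicator_of_notMem ht]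

lemma rr_cast {t : ℝ} (ht : t ≠ 0) :
    ((rr t : ℝ) : ℂ) = (Real.exp (-t) : ℂ) * (1 + 1 / (t : ℂ)) / (t : ℂ) := by
  unfold rr
  push_cast
  ring

-- pointwise expansion of the integrand as a tsum
lemma L1 {A : ℝ} (hA : 1 ≤ A) (f : ℕ → ℂ) {t : ℝ} (ht : 0 < t) :
    (Real.exp (-t) : ℂ) * (∑ n ∈ Finset.Icc 1 ⌊A * t⌋₊, f n) *
      (1 + 1 / (t : ℂ)) / (t : ℂ) = ∑' n, Fa A f n t := by
  have hA0 : 0 < A := lt_of_lt_of_le one_pos hA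
  rw [tsum_eq_sum (s := Finset.Icc 1 ⌊A * t⌋₊) ?_]
  · have hsum : ∑ n ∈ Finset.Icc 1 ⌊A * t⌋₊, Fa A f n t
        = (∑ n ∈ Finset.Icc 1 ⌊A * t⌋₊, f n) * ((rr t : ℝ) : ℂ) := by
      rw [Finset.sum_mul]
      apply Finset.sum_congr rfl
      intro n hn
      simp only [Finset.mem_Icc] at hn
      have hn0 : n ≠ 0 := by omega
      have hle : ((n:ℝ)/A) ≤ t := by
        rw [div_le_iff₀ hA0]
        have := (Nat.le_floor_iff (by positivity : (0:ℝ) ≤ A * t)).mp hn.2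
        linarith
      rw [Fa_eq A f hn0, Set.indicator_of_mem (Set.mem_Ici.mpr hle)]
    rw [hsum, rr_cast ht.ne']
    ring
  · intro n hn
    by_cases hn0 : n = 0
    · simp [Fa, hn0]
    · simp only [Finset.mem_Icc, not_and, not_le] at hn
      have hlt : ⌊A * t⌋₊ < n := hn (by omega)
      have h2 : A * t < n := Nat.lt_of_floor_lt hlt
      have htn : t < (n:ℝ)/A := by rw [lt_div_iff₀ hA0]; linarith
      unfold Fa
      rw [if_neg hn0, Set.indicator_of_notMem (by simpa using not_le.mpr htn)]

-- real integral of the indicator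
lemma L2 {A : ℝ} (hA : 1 ≤ A) {m : ℕ} (hm1 : (1:ℝ) ≤ (m:ℝ)) (n : ℕ) :
    ∫ t in Set.Ioi (m:ℝ), Set.indicator (Set.Ici ((n:ℝ)/A)) rr t =
      Real.exp (-(max (m:ℝ) ((n:ℝ)/A))) / max (m:ℝ) ((n:ℝ)/A) := by
  have hm0 : (0:ℝ) < m := lt_of_lt_of_le one_pos hm1
  rw [setIntegral_indicator measurableSet_Ici]
  rcases le_or_gt ((n:ℝ)/A) (m:ℝ) with h | h
  · have hset : Set.Ioi (m:ℝ) ∩ Set.Ici ((n:ℝ)/A) = Set.Ioi (m:ℝ) :=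
      Set.inter_eq_left.mpr (fun x hx => le_trans h (le_of_lt hx))
    rw [hset, max_eq_left h]
    exact aux_integral hm0
  · have hset : Set.Ioi (m:ℝ) ∩ Set.Ici ((n:ℝ)/A) = Set.Ici ((n:ℝ)/A) :=
      Set.inter_eq_right.mpr (fun x hx => lt_of_lt_of_le h hx)
    rw [hset, max_eq_right h.le, integral_Ici_eq_integral_Ioi]
    exact aux_integral (lt_trans hm0 h)

-- complex integral of Fa
lemma L3 {A : ℝ} (hA : 1 ≤ A) {m : ℕ} (hm1 : (1:ℝ) ≤ (m:ℝ)) (f : ℕ → ℂ) {n : ℕ} (hn : n ≠ 0) :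
    ∫ t in Set.Ioi (m:ℝ), Fa A f n t =
      f n * ((Real.exp (-(max (m:ℝ) ((n:ℝ)/A))) / max (m:ℝ) ((n:ℝ)/A) : ℝ) : ℂ) := by
  simp_rw [Fa_eq A f hn]
  rw [integral_const_mul]
  rw [show (∫ t in Set.Ioi (m:ℝ), ((Set.indicator (Set.Ici ((n:ℝ)/A)) rr t : ℝ) : ℂ))
      = ((∫ t in Set.Ioi (m:ℝ), Set.indicator (Set.Ici ((n:ℝ)/A)) rr t : ℝ) : ℂ)
    from integral_ofReal]
  rw [L2 hA hm1 n]

-- integrability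
lemma L5 {A : ℝ} (hA : 1 ≤ A) {m : ℕ} (hm1 : (1:ℝ) ≤ (m:ℝ)) (f : ℕ → ℂ) (n : ℕ) :
    Integrable (Fa A f n) (volume.restrict (Set.Ioi (m:ℝ))) := by
  have hm0 : (0:ℝ) < m := lt_of_lt_of_le one_pos hm1
  by_cases hn : n = 0
  · have : Fa A f n = fun _ => (0:ℂ) := by
      funext t; unfold Fa; rw [if_pos hn]
    rw [this]
    exact integrable_zero _ _ _
  · have : Fa A f n = fun t => f n * ((Set.indicator (Set.Ici ((n:ℝ)/A)) rr t : ℝ) : ℂ) := by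
      funext t; exact Fa_eq A f hn t
    rw [this]
    exact (((aux_integrableOn hm0).indicator measurableSet_Ici).ofReal).const_mul (f n)

-- norm integral
lemma L4 {A : ℝ} (hA : 1 ≤ A) {m : ℕ} (hm1 : (1:ℝ) ≤ (m:ℝ)) (f : ℕ → ℂ) {n : ℕ} (hn : n ≠ 0) :
    ∫ t in Set.Ioi (m:ℝ), ‖Fa A f n t‖ =
      ‖f n‖ *
        (Real.exp (-(max (m:ℝ) ((n:ℝ)/A))) / max (m:ℝ) ((n:ℝ)/A)) := by
  have hA0 : 0 < A := lt_of_lt_of_le one_pos hA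
  have hn0 : (0:ℝ) < (n:ℝ)/A := by
    have h1 : (0:ℝ) < n := by exact_mod_cast Nat.pos_of_ne_zero hn
    positivity
  have heq : ∀ t : ℝ, ‖Fa A f n t‖ =
      ‖f n‖ * Set.indicator (Set.Ici ((n:ℝ)/A)) rr t := by
    intro t
    rw [Fa_eq A f hn]
    by_cases ht : t ∈ Set.Ici ((n:ℝ)/A)
    · rw [Set.indicator_of_mem ht, norm_mul,
        Complex.norm_real,
        Real.norm_of_nonneg (rr_nonneg (lt_of_lt_of_le hn0 ht))]
    · rw [Set.indicator_of_notMem ht]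
      simp [Set.indicator_of_notMem ht]
  simp_rw [heq]
  rw [integral_const_mul, L2 hA hm1 n]

lemma L6 {A : ℝ} (hA : 1 ≤ A) {m : ℕ} (hm1 : (1:ℝ) ≤ (m:ℝ)) (f : ℕ → ℂ)
    (hf : ∀ n : ℕ, ‖f n‖ ≤ Real.exp ((n : ℝ) / (2 * A))) :
    Summable (fun n => ∫ t in Set.Ioi (m:ℝ), ‖Fa A f n t‖) := by
  have hA0 : 0 < A := lt_of_lt_of_le one_pos hA
  have hb : Summable (fun n : ℕ => Real.exp (-(1/(2*A)))^n) :=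
    summable_geometric_of_lt_one (Real.exp_nonneg _)
      (Real.exp_lt_one_iff.mpr (neg_lt_zero.mpr (by positivity)))
  refine Summable.of_nonneg_of_le (fun n => integral_nonneg (fun t => norm_nonneg _)) ?_ hb
  intro n
  by_cases hn : n = 0
  · have h0 : Fa A f n = fun _ => (0:ℂ) := by funext t; unfold Fa; rw [if_pos hn]
    rw [h0]
    simp [hn, Real.exp_nonneg]
  · rw [L4 hA hm1 f hn]
    set c := max (m:ℝ) ((n:ℝ)/A) with hc
    have hc1 : 1 ≤ c := le_trans hm1 (le_max_left _ _)
    have hcn : (n:ℝ)/A ≤ c := le_max_right _ _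
    calc ‖f n‖ * (Real.exp (-c) / c)
        ≤ Real.exp ((n:ℝ)/(2*A)) * (Real.exp (-c) / c) :=
          mul_le_mul_of_nonneg_right (hf n) (by positivity)
      _ ≤ Real.exp ((n:ℝ)/(2*A)) * Real.exp (-c) :=
          mul_le_mul_of_nonneg_left (div_le_self (Real.exp_nonneg _) hc1) (Real.exp_nonneg _)
      _ ≤ Real.exp ((n:ℝ)/(2*A)) * Real.exp (-((n:ℝ)/A)) :=
          mul_le_mul_of_nonneg_left (Real.exp_le_exp.mpr (neg_le_neg hcn)) (Real.exp_nonneg _)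
      _ = Real.exp (-(1/(2*A)))^n := by
          rw [← Real.exp_add, ← Real.exp_nat_mul]
          congr 1
          field_simp
          ring

theorem stmt10 (A : ℝ) (hA : 1 ≤ A) (m : ℕ) (hm : 1 ≤ m) (f : ℕ → ℂ)
    (hf : ∀ n : ℕ, ‖f n‖ ≤ Real.exp ((n : ℝ) / (2 * A))) :
    (∑' n : ℕ, if A * (m : ℝ) < (n : ℝ) then
        (Real.exp (-(n : ℝ) / A) : ℂ) * f n / (n : ℂ) else 0) =
      -((Real.exp (-(m : ℝ)) : ℂ) / ((A : ℂ) * (m : ℂ))) *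
          ∑ n ∈ Finset.Icc 1 ⌊A * (m : ℝ)⌋₊, f n +
        (1 / (A : ℂ)) * ∫ t in Set.Ioi (m : ℝ),
          (Real.exp (-t) : ℂ) * (∑ n ∈ Finset.Icc 1 ⌊A * t⌋₊, f n) *
            (1 + 1 / (t : ℂ)) / (t : ℂ) := by
  have hA0 : (0:ℝ) < A := lt_of_lt_of_le one_pos hA
  have hm1 : (1:ℝ) ≤ (m:ℝ) := by exact_mod_cast hm
  have hm0 : (0:ℝ) < (m:ℝ) := lt_of_lt_of_le one_pos hm1
  have hAne : (A:ℂ) ≠ 0 := by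
    simpa using Complex.ofReal_ne_zero.mpr hA0.ne'
  have hmne : ((m:ℕ):ℂ) ≠ 0 := Nat.cast_ne_zero.mpr (by omega)
  have hAm1 : (1:ℝ) ≤ A * m := by nlinarith
  have hInt := L5 hA hm1 f
  have hSum := L6 hA hm1 f hf
  have hswap := MeasureTheory.hasSum_integral_of_summable_integral_norm hInt hSum
  have hIeq : (∫ t in Set.Ioi (m:ℝ),
      (Real.exp (-t) : ℂ) * (∑ n ∈ Finset.Icc 1 ⌊A * t⌋₊, f n) *
        (1 + 1 / (t : ℂ)) / (t : ℂ)) = ∫ t in Set.Ioi (m:ℝ), ∑' n, Fa A f n t :=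
    setIntegral_congr_fun measurableSet_Ioi (fun t ht => L1 hA f (lt_trans hm0 ht))
  set V : ℕ → ℂ := fun n => (1 / (A:ℂ)) * ∫ t in Set.Ioi (m:ℝ), Fa A f n t with hVdef
  have hVsum : Summable V := hswap.summable.mul_left _
  have htsumV : ∑' n, V n = (1 / (A:ℂ)) * ∫ t in Set.Ioi (m:ℝ), ∑' n, Fa A f n t := by
    rw [hVdef, tsum_mul_left, hswap.tsum_eq]
  set W1 : ℕ → ℂ := fun n => if n ∈ Finset.Icc 1 ⌊A * (m:ℝ)⌋₊ then
    (Real.exp (-(m:ℝ)) : ℂ) / ((A:ℂ) * (m:ℂ)) * f n else 0 with hW1def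
  have hW1sum : Summable W1 := summable_of_ne_finset_zero
    (s := Finset.Icc 1 ⌊A * (m:ℝ)⌋₊) (fun n hn => if_neg hn)
  have claim : ∀ n : ℕ, (if A * (m : ℝ) < (n : ℝ) then
      (Real.exp (-(n : ℝ) / A) : ℂ) * f n / (n : ℂ) else 0) = V n - W1 n := by
    intro n
    by_cases hn : n = 0
    · subst hn
      have h0 : Fa A f 0 = fun _ => (0:ℂ) := by funext t; unfold Fa; rw [if_pos rfl]
      have hV0 : V 0 = 0 := by rw [hVdef]; simp [h0]
      have hW0 : W1 0 = 0 := by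
        rw [hW1def]
        simp
      rw [hV0, hW0, if_neg (by push_cast; linarith)]
      ring
    · have hVn : V n = (1 / (A:ℂ)) *
          (f n * ((Real.exp (-(max (m:ℝ) ((n:ℝ)/A))) / max (m:ℝ) ((n:ℝ)/A) : ℝ) : ℂ)) := by
        simp only [hVdef]
        rw [L3 hA hm1 f hn]
      rcases le_or_gt ((n:ℝ)) (A * m) with hc | hc
      · have hmem : n ∈ Finset.Icc 1 ⌊A * (m:ℝ)⌋₊ :=
          Finset.mem_Icc.mpr ⟨by omega, Nat.le_floor hc⟩
        have hmax : max (m:ℝ) ((n:ℝ)/A) = (m:ℝ) :=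
          max_eq_left ((div_le_iff₀ hA0).mpr (by linarith))
        rw [if_neg (not_lt.mpr hc), hVn, hmax, hW1def]
        simp only [if_pos hmem]
        push_cast
        field_simp
        ring
      · have hfl : ⌊A * (m:ℝ)⌋₊ < n := (Nat.floor_lt (by positivity)).mpr hc
        have hnmem : n ∉ Finset.Icc 1 ⌊A * (m:ℝ)⌋₊ := by
          simp only [Finset.mem_Icc, not_and, not_le]
          intro _
          omega
        have hmax : max (m:ℝ) ((n:ℝ)/A) = (n:ℝ)/A :=
          max_eq_right ((le_div_iff₀ hA0).mpr (by linarith))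
        have hnne : (n:ℂ) ≠ 0 := Nat.cast_ne_zero.mpr hn
        rw [if_pos hc, hVn, hmax, hW1def]
        simp only [if_neg hnmem, sub_zero]
        rw [show (-(n:ℝ)/A) = -((n:ℝ)/A) from neg_div _ _]
        push_cast
        field_simp
  have hW1t : ∑' n, W1 n = (Real.exp (-(m:ℝ)) : ℂ) / ((A:ℂ) * (m:ℂ)) *
      ∑ n ∈ Finset.Icc 1 ⌊A * (m:ℝ)⌋₊, f n := by
    rw [tsum_eq_sum (s := Finset.Icc 1 ⌊A * (m:ℝ)⌋₊) (fun n hn => if_neg hn),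
      Finset.mul_sum]
    exact Finset.sum_congr rfl (fun n hn => if_pos hn)
  calc (∑' n : ℕ, if A * (m : ℝ) < (n : ℝ) then
        (Real.exp (-(n : ℝ) / A) : ℂ) * f n / (n : ℂ) else 0)
      = ∑' n, (V n - W1 n) := tsum_congr claim
    _ = (∑' n, V n) - ∑' n, W1 n := Summable.tsum_sub hVsum hW1sum
    _ = _ := by
        rw [htsumV, ← hIeq, hW1t]
        ring
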